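/- For every k ≥ 1 and every colouring f : ℕ → [k] there exists a colour c ∈ [k] that is large with respect to f; that is, for every M ∈ ℕ there exist a ∈ ℕ and d ≥ 1 such that f(a + d·t) = c for all 0 ≤ t < M. -/
import Mathlib

/-- For every colouring `f : ℕ → [k]` there is a colour `c` that is large with respect to
`f`: for every `M` there is an arithmetic progression of length `M` (with positive
common difference) on which `f` is constantly `c`. -/
theorem exists_large_colour (k : ℕ) (hk : 1 ≤ k) (f : ℕ → Fin k) :
    ∃ c : Fin k, ∀ M : ℕ, ∃ a d : ℕ, 1 ≤ d ∧ ∀ t < M, f (a + d * t) = c := by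
  haveI : NeZero k := ⟨by omega⟩
  have H : ∀ M : ℕ, ∃ c : Fin k, ∃ a d : ℕ, 1 ≤ d ∧ ∀ t < M, f (a + d * t) = c := by
    intro M
    obtain ⟨d, hd, a, c, hc⟩ := Combinatorics.exists_mono_homothetic_copy (Finset.range M) f
    refine ⟨c, a, d, hd, fun t ht => ?_⟩
    have := hc t (Finset.mem_range.2 ht)
    simpa [smul_eq_mul, add_comm, mul_comm] using this
  choose g ga gd hgd hg using H
  obtain ⟨c, hc⟩ := Finite.exists_infinite_fiber g
  refine ⟨c, fun M => ?_⟩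
  obtain ⟨M', hM'c, hMM'⟩ := (Set.infinite_coe_iff.mp hc).exists_gt M
  refine ⟨ga M', gd M', hgd M', fun t ht => ?_⟩
  rw [hg M' t (lt_trans ht hMM'), hM'c]
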